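/- Let n₄ ≥ 1 and let f : (0,∞) → ℝ be the iterated Mellin convolution f = η_{a'''₁,v₁,w₁} ⋁ ⋯ ⋁ η_{a'''_{n₄},v_{n₄},w_{n₄}}, where a'''_j > 0, v_j > 0, w_j ≥ v_j + 1 for j = 1,…,n₄. Then f(t) = 0 for every 0 < t ≤ 1 and f(t) > 0 for every t > 1. -/

import Mathlib

open MeasureTheory Set

/-- `φ_{a,b}(t) = (1/a) t^{b/a} exp(−t^{1/a})`. -/
noncomputable def phiElem (a b : ℝ) : ℝ → ℝ :=
  fun t => (1 / a) * t ^ (b / a) * Real.exp (-(t ^ (1 / a)))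

/-- `ϕ_{a,b,c}(t) = t^{b/a} (1 − t^{1/a})^{c−b−1} / (a Γ(c−b))` for `0 < t < 1`, else `0`. -/
noncomputable def phi2Elem (a b c : ℝ) : ℝ → ℝ :=
  fun t => if t < 1 then
    (1 / (a * Real.Gamma (c - b))) * t ^ (b / a) * (1 - t ^ (1 / a)) ^ (c - b - 1)
  else 0

/-- `ψ_{a,b,c}(t) = (Γ(b+c)/a) t^{b/a} (1 + t^{1/a})^{−b−c}`. -/
noncomputable def psiElem (a b c : ℝ) : ℝ → ℝ :=
  fun t => (Real.Gamma (b + c) / a) * t ^ (b / a) * (1 + t ^ (1 / a)) ^ (-b - c)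

/-- `η_{a,b,c}(t) = t^{(1−c)/a} (t^{1/a} − 1)^{c−b−1} / (a Γ(c−b))` for `t > 1`, else `0`. -/
noncomputable def etaElem (a b c : ℝ) : ℝ → ℝ :=
  fun t => if 1 < t then
    (1 / (a * Real.Gamma (c - b))) * t ^ ((1 - c) / a) * (t ^ (1 / a) - 1) ^ (c - b - 1)
  else 0

/-- Mellin convolution of two functions on `(0, ∞)`. -/
noncomputable def mellinConv (g₁ g₂ : ℝ → ℝ) : ℝ → ℝ :=
  fun t => ∫ τ in Set.Ioi (0 : ℝ), g₁ (t / τ) * g₂ τ / τ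

/-- Iterated Mellin convolution of a (nonempty) list of functions, obtained by
folding the binary Mellin convolution; the value on the empty list is junk. -/
noncomputable def mellinConvList : List (ℝ → ℝ) → ℝ → ℝ
  | [] => fun _ => 0
  | g :: gs => gs.foldl mellinConv g

/-- Invariant preserved by Mellin convolution. -/
def Good (g : ℝ → ℝ) : Prop :=
  Measurable g ∧ (∀ t : ℝ, t ≤ 1 → g t = 0) ∧ (∀ t : ℝ, 1 < t → 0 < g t) ∧
  (∀ T : ℝ, ∃ M : ℝ, 0 ≤ M ∧ ∀ t : ℝ, t ≤ T → g t ≤ M)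

lemma Good.nonneg {g : ℝ → ℝ} (hg : Good g) (t : ℝ) : 0 ≤ g t := by
  rcases le_or_gt t 1 with h | h
  · exact (hg.2.1 t h).ge
  · exact (hg.2.2.1 t h).le

lemma good_eta {a b c : ℝ} (ha : 0 < a) (hb : 0 < b) (hc : b + 1 ≤ c) :
    Good (etaElem a b c) := by
  have hΓ : 0 < Real.Gamma (c - b) := Real.Gamma_pos_of_pos (by linarith)
  have hC : 0 < 1 / (a * Real.Gamma (c - b)) := by positivity
  have he : 0 ≤ c - b - 1 := by linarith
  refine ⟨?_, ?_, ?_, ?_⟩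
  · have heq : etaElem a b c = (Ioi (1:ℝ)).indicator (fun t =>
        (1 / (a * Real.Gamma (c - b))) * t ^ ((1 - c) / a) * (t ^ (1 / a) - 1) ^ (c - b - 1)) := by
      ext t
      by_cases h : 1 < t <;> simp [etaElem, indicator, mem_Ioi, h]
    rw [heq]
    refine Measurable.indicator ?_ measurableSet_Ioi
    measurability
  · intro t ht; simp [etaElem, not_lt.mpr ht]
  · intro t ht
    have ht0 : 0 < t := lt_trans one_pos ht
    have h1 : 1 < t ^ (1/a) :=
      (Real.one_lt_rpow_iff_of_pos ht0).2 (Or.inl ⟨ht, by positivity⟩)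
    have h1' : 0 < t ^ (1/a) - 1 := by linarith
    rw [etaElem, if_pos ht]
    have := Real.rpow_pos_of_pos ht0 ((1 - c)/a)
    have := Real.rpow_pos_of_pos h1' (c - b - 1)
    positivity
  · intro T
    set T' := max T 1 with hT'def
    have hT1 : (1:ℝ) ≤ T' := le_max_right _ _
    have hT0 : (0:ℝ) < T' := lt_of_lt_of_le one_pos hT1
    refine ⟨max 0 (1 / (a * Real.Gamma (c - b)) * (T' ^ (1/a)) ^ (c - b - 1)),
      le_max_left _ _, ?_⟩
    intro t ht
    rcases le_or_gt t 1 with h | h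
    · simp [etaElem, not_lt.mpr h]
    · have ht0 : 0 < t := lt_trans one_pos h
      have htT : t ≤ T' := le_trans ht (le_max_left _ _)
      have h1 : (1:ℝ) ≤ t ^ (1/a) := by
        have h1' : 1 < t ^ (1/a) :=
          (Real.one_lt_rpow_iff_of_pos (y := 1/a) ht0).2 (Or.inl ⟨h, by positivity⟩)
        linarith
      have e1 : t ^ ((1 - c)/a) ≤ 1 :=
        Real.rpow_le_one_of_one_le_of_nonpos h.le
          (div_nonpos_of_nonpos_of_nonneg (by linarith) ha.le)
      have e2 : t ^ (1/a) - 1 ≤ T' ^ (1/a) := by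
        have := Real.rpow_le_rpow ht0.le htT (by positivity : (0:ℝ) ≤ 1/a)
        linarith
      have e3 : (t ^ (1/a) - 1) ^ (c - b - 1) ≤ (T' ^ (1/a)) ^ (c - b - 1) :=
        Real.rpow_le_rpow (by linarith) e2 he
      rw [etaElem, if_pos h]
      refine le_trans ?_ (le_max_right _ _)
      calc 1 / (a * Real.Gamma (c - b)) * t ^ ((1 - c)/a) * (t ^ (1/a) - 1) ^ (c - b - 1)
          ≤ 1 / (a * Real.Gamma (c - b)) * 1 * (T' ^ (1/a)) ^ (c - b - 1) := by
            apply mul_le_mul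
            · exact mul_le_mul le_rfl e1 (Real.rpow_nonneg ht0.le _) hC.le
            · exact e3
            · exact Real.rpow_nonneg (by linarith) _
            · positivity
        _ = 1 / (a * Real.Gamma (c - b)) * (T' ^ (1/a)) ^ (c - b - 1) := by ring

lemma good_conv {g₁ g₂ : ℝ → ℝ} (h₁ : Good g₁) (h₂ : Good g₂) :
    Good (mellinConv g₁ g₂) := by
  obtain ⟨m₁, z₁, p₁, bd₁⟩ := h₁
  obtain ⟨m₂, z₂, p₂, bd₂⟩ := h₂
  have n₁ : ∀ t, 0 ≤ g₁ t := Good.nonneg ⟨m₁, z₁, p₁, bd₁⟩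
  have n₂ : ∀ t, 0 ≤ g₂ t := Good.nonneg ⟨m₂, z₂, p₂, bd₂⟩
  have hzero : ∀ t : ℝ, ∀ τ ∈ Ioi (0:ℝ), τ ∉ Ioo 1 t → g₁ (t/τ) * g₂ τ / τ = 0 := by
    intro t τ hτ hn
    rcases le_or_gt τ 1 with h | h
    · simp [z₂ τ h]
    · have htτ : t ≤ τ := by
        by_contra hcon
        exact hn ⟨h, not_le.mp hcon⟩
      have : t / τ ≤ 1 := (div_le_one (lt_trans one_pos h)).2 htτ
      simp [z₁ _ this]
  have meas : ∀ t : ℝ,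
      AEStronglyMeasurable (fun τ => g₁ (t/τ) * g₂ τ / τ) (volume.restrict (Ioi 0)) := by
    intro t
    exact (((m₁.comp (measurable_const.div measurable_id)).mul m₂).div
      measurable_id).aestronglyMeasurable
  -- pointwise bound lemma
  have hbound : ∀ t T : ℝ, t ≤ T → ∀ M₁ M₂ : ℝ, 0 ≤ M₁ → 0 ≤ M₂ →
      (∀ s ≤ T, g₁ s ≤ M₁) → (∀ s ≤ T, g₂ s ≤ M₂) →
      ∀ τ ∈ Ioi (0:ℝ), g₁ (t/τ) * g₂ τ / τ ≤ (Ioo 1 T).indicator (fun _ => M₁ * M₂) τ := by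
    intro t T htT M₁ M₂ hM₁0 hM₂0 hM₁ hM₂ τ hτ
    by_cases hmem : τ ∈ Ioo 1 t
    · have h1τ : 1 < τ := hmem.1
      have hτt : τ < t := hmem.2
      have hτ0 : 0 < τ := lt_trans one_pos h1τ
      have hmemT : τ ∈ Ioo 1 T := ⟨h1τ, lt_of_lt_of_le hτt htT⟩
      rw [indicator_of_mem hmemT]
      have hg1 : g₁ (t/τ) ≤ M₁ := hM₁ _ (le_trans (div_le_self (by linarith) h1τ.le) htT)
      have hg2 : g₂ τ ≤ M₂ := hM₂ _ (le_trans hτt.le htT)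
      calc g₁ (t/τ) * g₂ τ / τ ≤ g₁ (t/τ) * g₂ τ :=
            div_le_self (mul_nonneg (n₁ _) (n₂ _)) h1τ.le
        _ ≤ M₁ * M₂ := mul_le_mul hg1 hg2 (n₂ _) hM₁0
    · rw [hzero t τ hτ hmem]
      exact indicator_nonneg (fun _ _ => mul_nonneg hM₁0 hM₂0) _
  have indint : ∀ T M : ℝ,
      Integrable ((Ioo (1:ℝ) T).indicator (fun _ => M)) (volume.restrict (Ioi 0)) := by
    intro T M
    refine (integrable_indicator_iff measurableSet_Ioo).2 ?_
    refine integrableOn_const (ne_of_lt ?_)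
    calc (volume.restrict (Ioi (0:ℝ))) (Ioo 1 T) ≤ volume (Ioo 1 T) :=
          Measure.restrict_le_self _
      _ < ⊤ := measure_Ioo_lt_top
  have nonnegae : ∀ t : ℝ,
      (0 : ℝ → ℝ) ≤ᶠ[MeasureTheory.ae (volume.restrict (Ioi 0))] fun τ => g₁ (t/τ) * g₂ τ / τ := by
    intro t
    refine (ae_restrict_iff' measurableSet_Ioi).2 (Filter.Eventually.of_forall ?_)
    intro τ hτ
    exact div_nonneg (mul_nonneg (n₁ _) (n₂ _)) (le_of_lt hτ)
  have intg : ∀ t : ℝ, IntegrableOn (fun τ => g₁ (t/τ) * g₂ τ / τ) (Ioi 0) := by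
    intro t
    obtain ⟨M₁, hM₁0, hM₁⟩ := bd₁ t
    obtain ⟨M₂, hM₂0, hM₂⟩ := bd₂ t
    refine Integrable.mono' (indint t (M₁ * M₂)) (meas t) ?_
    refine (ae_restrict_iff' measurableSet_Ioi).2 (Filter.Eventually.of_forall ?_)
    intro τ hτ
    rw [Real.norm_eq_abs, abs_of_nonneg (div_nonneg (mul_nonneg (n₁ _) (n₂ _)) (le_of_lt hτ))]
    exact hbound t t le_rfl M₁ M₂ hM₁0 hM₂0 hM₁ hM₂ τ hτ
  have zconv : ∀ t : ℝ, t ≤ 1 → mellinConv g₁ g₂ t = 0 := by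
    intro t ht
    unfold mellinConv
    rw [setIntegral_congr_fun measurableSet_Ioi (g := fun _ => (0:ℝ)) ?_, integral_zero]
    intro τ hτ
    refine hzero t τ hτ ?_
    intro hmem
    exact absurd (lt_trans hmem.1 hmem.2) (not_lt.2 ht)
  refine ⟨?_, zconv, ?_, ?_⟩
  · have hK : StronglyMeasurable (Function.uncurry fun t τ => g₁ (t/τ) * g₂ τ / τ) := by
      apply Measurable.stronglyMeasurable
      exact ((m₁.comp (measurable_fst.div measurable_snd)).mul (m₂.comp measurable_snd)).div
        measurable_snd
    exact hK.integral_prod_right.measurable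
  · intro t ht
    refine (setIntegral_pos_iff_support_of_nonneg_ae (nonnegae t) (intg t)).2 ?_
    have hsub : Ioo 1 t ⊆ Function.support (fun τ => g₁ (t/τ) * g₂ τ / τ) ∩ Ioi 0 := by
      intro τ hτm
      have hτ0 : 0 < τ := lt_trans one_pos hτm.1
      refine ⟨?_, hτ0⟩
      have h1 : 1 < t / τ := (one_lt_div hτ0).2 hτm.2
      have hp1 := p₁ _ h1
      have hp2 := p₂ _ hτm.1
      simp only [Function.mem_support]
      exact ne_of_gt (div_pos (mul_pos hp1 hp2) hτ0)
    calc (0:ENNReal) < volume (Ioo 1 t) := by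
          rw [Real.volume_Ioo]; exact ENNReal.ofReal_pos.2 (by linarith)
      _ ≤ volume (Function.support (fun τ => g₁ (t/τ) * g₂ τ / τ) ∩ Ioi 0) :=
          measure_mono hsub
  · intro T
    obtain ⟨M₁, hM₁0, hM₁⟩ := bd₁ T
    obtain ⟨M₂, hM₂0, hM₂⟩ := bd₂ T
    refine ⟨max 0 (M₁ * M₂ * (T - 1)), le_max_left _ _, ?_⟩
    intro t ht
    rcases le_or_gt t 1 with h | h
    · rw [zconv t h]; exact le_max_left _ _
    · have step : mellinConv g₁ g₂ t ≤
          ∫ τ in Ioi (0:ℝ), (Ioo 1 T).indicator (fun _ => M₁ * M₂) τ := by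
        unfold mellinConv
        exact setIntegral_mono_on (intg t) (indint T (M₁ * M₂)) measurableSet_Ioi
          (hbound t T ht M₁ M₂ hM₁0 hM₂0 hM₁ hM₂)
      have hval : ∫ τ in Ioi (0:ℝ), (Ioo 1 T).indicator (fun _ => M₁ * M₂) τ
          = (T - 1) * (M₁ * M₂) := by
        rw [setIntegral_indicator measurableSet_Ioo, setIntegral_const]
        have hss : Ioi (0:ℝ) ∩ Ioo 1 T = Ioo 1 T :=
          inter_eq_self_of_subset_right (fun x hx => lt_trans one_pos hx.1)
        rw [hss, measureReal_def, Real.volume_Ioo, ENNReal.toReal_ofReal (by linarith : (0:ℝ) ≤ T - 1)]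
        simp [smul_eq_mul]
      refine le_trans step ?_
      rw [hval]
      refine le_trans (le_of_eq (by ring)) (le_max_right 0 (M₁ * M₂ * (T - 1)))

lemma good_foldl : ∀ (gs : List (ℝ → ℝ)) (g : ℝ → ℝ), Good g → (∀ h ∈ gs, Good h) →
    Good (gs.foldl mellinConv g)
  | [], g, hg, _ => hg
  | h :: gs, g, hg, hs => by
    simp only [List.foldl_cons]
    exact good_foldl gs _ (good_conv hg (hs h List.mem_cons_self))
      (fun k hk => hs k (List.mem_cons_of_mem _ hk))

theorem stmt_9 (n₄ : ℕ) (hn₄ : 1 ≤ n₄)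
    (a''' v w : Fin n₄ → ℝ)
    (ha''' : ∀ j, 0 < a''' j) (hv : ∀ j, 0 < v j) (hw : ∀ j, v j + 1 ≤ w j)
    (f : ℝ → ℝ)
    (hf : f = mellinConvList (List.ofFn fun j => etaElem (a''' j) (v j) (w j))) :
    (∀ t : ℝ, 0 < t → t ≤ 1 → f t = 0) ∧ (∀ t : ℝ, 1 < t → 0 < f t) := by
  obtain ⟨m, rfl⟩ : ∃ m, n₄ = m + 1 := ⟨n₄ - 1, (Nat.succ_pred_eq_of_pos hn₄).symm⟩
  have hgood : Good f := by
    rw [hf, List.ofFn_succ]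
    show Good (List.foldl mellinConv _ _)
    refine good_foldl _ _ (good_eta (ha''' 0) (hv 0) (hw 0)) ?_
    intro h hh
    obtain ⟨i, rfl⟩ := List.mem_ofFn.1 hh
    exact good_eta (ha''' _) (hv _) (hw _)
  exact ⟨fun t _ ht => hgood.2.1 t ht, hgood.2.2.1⟩
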